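/- Let R > 0 and let u, v : ℝ → ℝ be continuously differentiable functions with u, u', v, v' square integrable on ℝ, with u(x), v(x) → 0 as x → ±∞, and suppose ‖u‖_{L²(ℝ)} ≤ R, ‖u'‖_{L²(ℝ)} ≤ R, ‖v‖_{L²(ℝ)} ≤ R, ‖v'‖_{L²(ℝ)} ≤ R. Then | ∫_ℝ u(x)³ dx − ∫_ℝ v(x)³ dx | ≤ 3R² ‖u − v‖_{L²(ℝ)}. In particular, the mapping v ↦ ∫_ℝ v(x)³ dx is Lipschitz continuous in the L²(ℝ) metric on bounded sets of H¹(ℝ). -/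

import Mathlib

open MeasureTheory Filter

lemma my_cs (f g : ℝ → ℝ) (hf : Continuous f) (hg : Continuous g)
    (hf2 : Integrable (fun x => f x ^ 2)) (hg2 : Integrable (fun x => g x ^ 2)) :
    ∫ x, |f x * g x| ≤ Real.sqrt (∫ x, f x ^ 2) * Real.sqrt (∫ x, g x ^ 2) := by
  have hpq : Real.HolderConjugate 2 2 := ⟨by norm_num, by norm_num, by norm_num⟩
  have hmf : MemLp (fun x => |f x|) (ENNReal.ofReal 2) (volume : Measure ℝ) := by
    rw [show ENNReal.ofReal 2 = 2 by norm_num]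
    exact (memLp_two_iff_integrable_sq hf.abs.aestronglyMeasurable).2 (by simpa [sq_abs] using hf2)
  have hmg : MemLp (fun x => |g x|) (ENNReal.ofReal 2) (volume : Measure ℝ) := by
    rw [show ENNReal.ofReal 2 = 2 by norm_num]
    exact (memLp_two_iff_integrable_sq hg.abs.aestronglyMeasurable).2 (by simpa [sq_abs] using hg2)
  have h := integral_mul_le_Lp_mul_Lq_of_nonneg hpq
    (Filter.Eventually.of_forall fun x => abs_nonneg (f x))
    (Filter.Eventually.of_forall fun x => abs_nonneg (g x)) hmf hmg
  simp only [abs_mul] at *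
  calc ∫ x, |f x| * |g x| ≤ (∫ x, |f x| ^ (2:ℝ)) ^ ((1:ℝ)/2) * (∫ x, |g x| ^ (2:ℝ)) ^ ((1:ℝ)/2) := h
    _ = Real.sqrt (∫ x, f x ^ 2) * Real.sqrt (∫ x, g x ^ 2) := by
        rw [Real.sqrt_eq_rpow, Real.sqrt_eq_rpow]
        congr 2 <;> · apply integral_congr_ae; filter_upwards with x
                      rw [show (2:ℝ) = ((2:ℕ):ℝ) by norm_num, Real.rpow_natCast]
                      simp [sq_abs]

lemma my_sup (u : ℝ → ℝ) (hu : ContDiff ℝ 1 u)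
    (hu2 : Integrable (fun x => u x ^ 2))
    (hu'2 : Integrable (fun x => deriv u x ^ 2))
    (hutop : Tendsto u atTop (nhds 0)) (hubot : Tendsto u atBot (nhds 0)) (x₀ : ℝ) :
    u x₀ ^ 2 ≤ Real.sqrt (∫ x, u x ^ 2) * Real.sqrt (∫ x, deriv u x ^ 2) := by
  have hcu : Continuous u := hu.continuous
  have hcu' : Continuous (deriv u) := hu.continuous_deriv le_rfl
  set h : ℝ → ℝ := fun x => 2 * (u x * deriv u x) with hh
  have hderiv : ∀ x : ℝ, HasDerivAt (fun y => u y ^ 2) (h x) x := by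
    intro x
    have := ((hu.differentiable one_ne_zero x).hasDerivAt).fun_pow 2
    simpa [hh, mul_comm, mul_assoc, mul_left_comm] using this
  have hint : Integrable h := by
    have : Integrable (fun x => u x ^ 2 + deriv u x ^ 2) := hu2.add hu'2
    refine this.mono' (continuous_const.mul (hcu.mul hcu')).aestronglyMeasurable ?_
    filter_upwards with x
    have := abs_nonneg (u x * deriv u x)
    have h2 : 2 * |u x * deriv u x| ≤ u x ^ 2 + deriv u x ^ 2 := by
      nlinarith [sq_nonneg (|u x| - |deriv u x|), abs_mul (u x) (deriv u x),
        sq_abs (u x), sq_abs (deriv u x), abs_nonneg (u x), abs_nonneg (deriv u x)]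
    calc ‖h x‖ = 2 * |u x * deriv u x| := by rw [hh]; simp [abs_mul]
      _ ≤ u x ^ 2 + deriv u x ^ 2 := h2
  have htop2 : Tendsto (fun y => u y ^ 2) atTop (nhds 0) := by
    simpa using hutop.pow 2
  have hbot2 : Tendsto (fun y => u y ^ 2) atBot (nhds 0) := by
    simpa using hubot.pow 2
  have hIic : ∫ x in Set.Iic x₀, h x = u x₀ ^ 2 - 0 :=
    integral_Iic_of_hasDerivAt_of_tendsto' (fun x _ => hderiv x) hint.integrableOn hbot2
  have hIoi : ∫ x in Set.Ioi x₀, h x = 0 - u x₀ ^ 2 :=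
    integral_Ioi_of_hasDerivAt_of_tendsto' (fun x _ => hderiv x) hint.integrableOn htop2
  have habs : Integrable (fun x => |h x|) := hint.abs
  have hIle : ∫ x in Set.Iic x₀, h x ≤ ∫ x in Set.Iic x₀, |h x| :=
    integral_mono hint.integrableOn habs.integrableOn (fun x => le_abs_self _)
  have hOle : -∫ x in Set.Ioi x₀, h x ≤ ∫ x in Set.Ioi x₀, |h x| := by
    rw [← integral_neg]
    exact integral_mono hint.integrableOn.neg habs.integrableOn (fun x => neg_le_abs _)
  have hsplit : (∫ x in Set.Iic x₀, |h x|) + ∫ x in Set.Ioi x₀, |h x| = ∫ x, |h x| :=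
    intervalIntegral.integral_Iic_add_Ioi (b := x₀) habs.integrableOn habs.integrableOn
  have habs_le : ∫ x, |h x| ≤ 2 * (Real.sqrt (∫ x, u x ^ 2) * Real.sqrt (∫ x, deriv u x ^ 2)) := by
    have : (fun x => |h x|) = fun x => 2 * |u x * deriv u x| := by
      funext x; rw [hh]; simp [abs_mul]
    rw [this, integral_const_mul]
    have := my_cs u (deriv u) hcu hcu' hu2 hu'2
    linarith
  have h1 : u x₀ ^ 2 ≤ ∫ x in Set.Iic x₀, |h x| := by rw [hIic] at hIle; linarith
  have h2 : u x₀ ^ 2 ≤ ∫ x in Set.Ioi x₀, |h x| := by rw [hIoi] at hOle; linarith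
  linarith [h1, h2, hsplit, habs_le]

/-- The map v ↦ ∫ v³ is Lipschitz in the L² metric on bounded sets of H¹. -/
theorem cube_integral_lipschitz_on_H1_bounded
    (R : ℝ) (hR : 0 < R)
    (u v : ℝ → ℝ) (hu : ContDiff ℝ 1 u) (hv : ContDiff ℝ 1 v)
    (hu2 : Integrable (fun x => (u x) ^ 2))
    (hu'2 : Integrable (fun x => (deriv u x) ^ 2))
    (hv2 : Integrable (fun x => (v x) ^ 2))
    (hv'2 : Integrable (fun x => (deriv v x) ^ 2))
    (hutop : Tendsto u atTop (nhds 0)) (hubot : Tendsto u atBot (nhds 0))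
    (hvtop : Tendsto v atTop (nhds 0)) (hvbot : Tendsto v atBot (nhds 0))
    (huR : Real.sqrt (∫ x, (u x) ^ 2) ≤ R)
    (hu'R : Real.sqrt (∫ x, (deriv u x) ^ 2) ≤ R)
    (hvR : Real.sqrt (∫ x, (v x) ^ 2) ≤ R)
    (hv'R : Real.sqrt (∫ x, (deriv v x) ^ 2) ≤ R) :
    |(∫ x, (u x) ^ 3) - ∫ x, (v x) ^ 3|
      ≤ 3 * R ^ 2 * Real.sqrt (∫ x, (u x - v x) ^ 2) := by
  have hcu : Continuous u := hu.continuous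
  have hcv : Continuous v := hv.continuous
  -- sup bounds
  have hsupu : ∀ x, u x ^ 2 ≤ R ^ 2 := by
    intro x
    calc u x ^ 2 ≤ Real.sqrt (∫ x, u x ^ 2) * Real.sqrt (∫ x, deriv u x ^ 2) :=
          my_sup u hu hu2 hu'2 hutop hubot x
      _ ≤ R * R := mul_le_mul huR hu'R (Real.sqrt_nonneg _) hR.le
      _ = R ^ 2 := by ring
  have hsupv : ∀ x, v x ^ 2 ≤ R ^ 2 := by
    intro x
    calc v x ^ 2 ≤ Real.sqrt (∫ x, v x ^ 2) * Real.sqrt (∫ x, deriv v x ^ 2) :=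
          my_sup v hv hv2 hv'2 hvtop hvbot x
      _ ≤ R * R := mul_le_mul hvR hv'R (Real.sqrt_nonneg _) hR.le
      _ = R ^ 2 := by ring
  have habsu : ∀ x, |u x| ≤ R := by
    intro x
    rw [← Real.sqrt_sq_eq_abs]
    exact (Real.sqrt_le_sqrt (hsupu x)).trans_eq (Real.sqrt_sq hR.le)
  have habsv : ∀ x, |v x| ≤ R := by
    intro x
    rw [← Real.sqrt_sq_eq_abs]
    exact (Real.sqrt_le_sqrt (hsupv x)).trans_eq (Real.sqrt_sq hR.le)
  -- integrability facts
  have huv : Integrable (fun x => u x * v x) := by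
    refine (hu2.add hv2).mono' (hcu.mul hcv).aestronglyMeasurable ?_
    filter_upwards with x
    have := sq_nonneg (|u x| - |v x|)
    have habs : |u x * v x| = |u x| * |v x| := abs_mul _ _
    have : ‖u x * v x‖ = |u x * v x| := rfl
    rw [this, habs]
    simp only [Pi.add_apply]
    nlinarith [sq_abs (u x), sq_abs (v x), sq_nonneg (|u x| - |v x|)]
  have hd2 : Integrable (fun x => (u x - v x) ^ 2) := by
    have : (fun x => (u x - v x) ^ 2) = fun x => (u x ^ 2 + v x ^ 2) - 2 * (u x * v x) := by
      funext x; ring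
    rw [this]
    exact (hu2.add hv2).sub (huv.const_mul 2)
  set w : ℝ → ℝ := fun x => u x ^ 2 + u x * v x + v x ^ 2 with hw
  have hcw : Continuous w := ((hcu.pow 2).add (hcu.mul hcv)).add (hcv.pow 2)
  have hwbound : ∀ x, |w x| ≤ 3 * R ^ 2 := by
    intro x
    have h1 : |w x| ≤ u x ^ 2 + |u x| * |v x| + v x ^ 2 := by
      rw [hw]
      calc |u x ^ 2 + u x * v x + v x ^ 2| ≤ |u x ^ 2 + u x * v x| + |v x ^ 2| := abs_add_le _ _
        _ ≤ |u x ^ 2| + |u x * v x| + |v x ^ 2| := by linarith [abs_add_le (u x ^ 2) (u x * v x)]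
        _ = u x ^ 2 + |u x| * |v x| + v x ^ 2 := by rw [abs_mul, abs_sq, abs_sq]
    have h2 : |u x| * |v x| ≤ R * R :=
      mul_le_mul (habsu x) (habsv x) (abs_nonneg _) hR.le
    nlinarith [hsupu x, hsupv x]
  have hw_int : Integrable w := (hu2.add huv).add hv2
  have hw2_int : Integrable (fun x => w x ^ 2) := by
    refine ((((hu2.add huv.abs).add hv2).const_mul (3 * R ^ 2)).mono'
      ((hcw.pow 2)).aestronglyMeasurable ?_)
    filter_upwards with x
    have h1 : |w x| ≤ u x ^ 2 + |u x * v x| + v x ^ 2 := by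
      rw [hw]
      calc |u x ^ 2 + u x * v x + v x ^ 2| ≤ |u x ^ 2 + u x * v x| + |v x ^ 2| := abs_add_le _ _
        _ ≤ |u x ^ 2| + |u x * v x| + |v x ^ 2| := by linarith [abs_add_le (u x ^ 2) (u x * v x)]
        _ = u x ^ 2 + |u x * v x| + v x ^ 2 := by rw [abs_sq, abs_sq]
    have h2 := hwbound x
    have h3 : ‖w x ^ 2‖ = |w x| * |w x| := by
      rw [Real.norm_eq_abs, abs_sq]; ring_nf; rw [sq_abs]
    rw [h3]
    have h4 : (0:ℝ) ≤ |w x| := abs_nonneg _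
    simp only [Pi.add_apply]
    nlinarith [abs_nonneg (u x * v x), sq_nonneg (u x), sq_nonneg (v x)]
  -- integral bounds
  have hIu : ∫ x, u x ^ 2 ≤ R ^ 2 := by
    have h0 : 0 ≤ ∫ x, u x ^ 2 := integral_nonneg fun x => sq_nonneg _
    nlinarith [Real.sq_sqrt h0, huR, Real.sqrt_nonneg (∫ x, u x ^ 2)]
  have hIv : ∫ x, v x ^ 2 ≤ R ^ 2 := by
    have h0 : 0 ≤ ∫ x, v x ^ 2 := integral_nonneg fun x => sq_nonneg _
    nlinarith [Real.sq_sqrt h0, hvR, Real.sqrt_nonneg (∫ x, v x ^ 2)]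
  have hIuv : ∫ x, |u x * v x| ≤ R ^ 2 := by
    calc ∫ x, |u x * v x| ≤ Real.sqrt (∫ x, u x ^ 2) * Real.sqrt (∫ x, v x ^ 2) :=
          my_cs u v hcu hcv hu2 hv2
      _ ≤ R * R := mul_le_mul huR hvR (Real.sqrt_nonneg _) hR.le
      _ = R ^ 2 := by ring
  have hIw2 : ∫ x, w x ^ 2 ≤ 9 * R ^ 4 := by
    have hle : ∀ x, w x ^ 2 ≤ 3 * R ^ 2 * (u x ^ 2 + |u x * v x| + v x ^ 2) := by
      intro x
      have h1 : |w x| ≤ u x ^ 2 + |u x * v x| + v x ^ 2 := by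
        rw [hw]
        calc |u x ^ 2 + u x * v x + v x ^ 2| ≤ |u x ^ 2 + u x * v x| + |v x ^ 2| := abs_add_le _ _
          _ ≤ |u x ^ 2| + |u x * v x| + |v x ^ 2| := by linarith [abs_add_le (u x ^ 2) (u x * v x)]
          _ = u x ^ 2 + |u x * v x| + v x ^ 2 := by rw [abs_sq, abs_sq]
      have h2 := hwbound x
      nlinarith [abs_nonneg (w x), sq_abs (w x), abs_nonneg (u x * v x),
        sq_nonneg (u x), sq_nonneg (v x)]
    calc ∫ x, w x ^ 2 ≤ ∫ x, 3 * R ^ 2 * (u x ^ 2 + |u x * v x| + v x ^ 2) :=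
          integral_mono hw2_int (((hu2.add huv.abs).add hv2).const_mul _) hle
      _ = 3 * R ^ 2 * ((∫ x, u x ^ 2) + (∫ x, |u x * v x|) + ∫ x, v x ^ 2) := by
          have hA : Integrable (fun x => u x ^ 2 + |u x * v x|) := hu2.add huv.abs
          rw [integral_const_mul, integral_add hA hv2, integral_add hu2 huv.abs]
      _ ≤ 3 * R ^ 2 * (R ^ 2 + R ^ 2 + R ^ 2) := by
          have h3 : (0:ℝ) ≤ 3 * R ^ 2 := by positivity
          apply mul_le_mul_of_nonneg_left _ h3
          linarith
      _ = 9 * R ^ 4 := by ring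
  have hsqrtw : Real.sqrt (∫ x, w x ^ 2) ≤ 3 * R ^ 2 := by
    have : (9:ℝ) * R ^ 4 = (3 * R ^ 2) ^ 2 := by ring
    calc Real.sqrt (∫ x, w x ^ 2) ≤ Real.sqrt (9 * R ^ 4) := Real.sqrt_le_sqrt hIw2
      _ = 3 * R ^ 2 := by rw [this, Real.sqrt_sq (by positivity)]
  -- cube integrals
  have hu3 : Integrable (fun x => u x ^ 3) := by
    refine (hu2.const_mul R).mono' (hcu.pow 3).aestronglyMeasurable ?_
    filter_upwards with x
    have h1 : ‖u x ^ 3‖ = |u x| * u x ^ 2 := by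
      rw [Real.norm_eq_abs, abs_pow]
      rw [show |u x| ^ 3 = |u x| * |u x| ^ 2 by ring, sq_abs]
    rw [h1]
    exact mul_le_mul_of_nonneg_right (habsu x) (sq_nonneg _)
  have hv3 : Integrable (fun x => v x ^ 3) := by
    refine (hv2.const_mul R).mono' (hcv.pow 3).aestronglyMeasurable ?_
    filter_upwards with x
    have h1 : ‖v x ^ 3‖ = |v x| * v x ^ 2 := by
      rw [Real.norm_eq_abs, abs_pow]
      rw [show |v x| ^ 3 = |v x| * |v x| ^ 2 by ring, sq_abs]
    rw [h1]
    exact mul_le_mul_of_nonneg_right (habsv x) (sq_nonneg _)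
  have hdiff : (∫ x, u x ^ 3) - ∫ x, v x ^ 3 = ∫ x, (u x - v x) * w x := by
    rw [← integral_sub hu3 hv3]
    congr 1; funext x; rw [hw]; ring
  rw [hdiff]
  calc |∫ x, (u x - v x) * w x| ≤ ∫ x, |(u x - v x) * w x| := by
        simpa only [Real.norm_eq_abs] using
          norm_integral_le_integral_norm (μ := (volume : Measure ℝ)) fun x => (u x - v x) * w x
    _ ≤ Real.sqrt (∫ x, (u x - v x) ^ 2) * Real.sqrt (∫ x, w x ^ 2) :=
        my_cs (fun x => u x - v x) w (hcu.sub hcv) hcw hd2 hw2_int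
    _ ≤ Real.sqrt (∫ x, (u x - v x) ^ 2) * (3 * R ^ 2) :=
        mul_le_mul_of_nonneg_left hsqrtw (Real.sqrt_nonneg _)
    _ = 3 * R ^ 2 * Real.sqrt (∫ x, (u x - v x) ^ 2) := by ring
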